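/- Let P be a real polynomial of degree n ≥ 1, let a < b be real numbers, and let k be an integer with 1 ≤ k ≤ n. Let q_0, …, q_n denote the coefficients of Q(x) := P(a + (b−a)·x), so that q_i = P^{(i)}(a)·(b−a)^i / i!. For each ξ ∈ [a,b], define the polynomial F_ξ(x) := Σ_{i=0}^{k−1} q_i·x^i + (P^{(k)}(ξ)·(b−a)^k / k!)·x^k, and let G_ξ be the polynomial G_ξ(X) := Σ_{i=0}^{k−1} q_i·(X+1)^{k−i} + P^{(k)}(ξ)·(b−a)^k / k!, i.e. G_ξ(X) = (X+1)^k·F_ξ(1/(X+1)). If for every ξ ∈ [a,b] the polynomial G_ξ is nonzero and all of its nonzero coefficients have the same sign, then P has no root in the open interval (a,b). -/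

import Mathlib

open Polynomial

private lemma contDiff_eval_poly (P : Polynomial ℝ) {m : ℕ∞} :
    ContDiff ℝ m fun y : ℝ => P.eval y := by
  have h : (fun y : ℝ => P.eval y)
      = fun y : ℝ => ∑ i ∈ Finset.range (P.natDegree + 1), P.coeff i * y ^ i := by
    funext y; exact P.eval_eq_sum_range y
  rw [h]
  exact ContDiff.sum fun i _ => contDiff_const.mul (contDiff_id.pow i)

private lemma iteratedDerivWithin_poly {s : Set ℝ} (hs : UniqueDiffOn ℝ s) :
    ∀ (m : ℕ) (P : Polynomial ℝ) (y : ℝ), y ∈ s →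
      iteratedDerivWithin m (fun z => P.eval z) s y = (derivative^[m] P).eval y := by
  intro m
  induction m with
  | zero => intro P y hy; simp
  | succ m IH =>
    intro P y hy
    rw [iteratedDerivWithin_succ']
    have hEq : Set.EqOn (derivWithin (fun z : ℝ => P.eval z) s)
        (fun z : ℝ => (derivative P).eval z) s := by
      intro z hz
      rw [(P.differentiableAt).derivWithin (hs z hz)]
      exact Polynomial.deriv (𝕜 := ℝ) (p := P)
    rw [iteratedDerivWithin_congr hEq hy, IH (derivative P) y hy,
      Function.iterate_succ_apply]

private lemma poly_pos_of_nonneg_coeffs (Q : Polynomial ℝ) (hQ : Q ≠ 0)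
    (hc : ∀ j, 0 ≤ Q.coeff j) {y : ℝ} (hy : 0 < y) : 0 < Q.eval y := by
  rw [Q.eval_eq_sum_range]
  apply Finset.sum_pos' (fun i _ => mul_nonneg (hc i) (pow_pos hy i).le)
  refine ⟨Q.natDegree, Finset.self_mem_range_succ _, ?_⟩
  have hne : Q.coeff Q.natDegree ≠ 0 :=
    fun h => hQ (Polynomial.leadingCoeff_eq_zero.mp h)
  exact mul_pos (lt_of_le_of_ne (hc _) (Ne.symm hne)) (pow_pos hy _)

/-- Root exclusion via the truncated Taylor expansion (degree truncation):
if for every `ξ ∈ [a,b]` the transformed truncated polynomial `G_ξ` is nonzero and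
all of its nonzero coefficients have the same sign, then `P` has no root in `(a,b)`. -/
theorem truncated_taylor_exclusion
    (P : Polynomial ℝ) (n : ℕ) (hn : P.natDegree = n) (hn1 : 1 ≤ n)
    (a b : ℝ) (hab : a < b) (k : ℕ) (hk1 : 1 ≤ k) (hkn : k ≤ n)
    (q : ℕ → ℝ)
    (hq : ∀ i, q i = (derivative^[i] P).eval a * (b - a) ^ i / (Nat.factorial i))
    (G : ℝ → Polynomial ℝ)
    (hG : ∀ ξ : ℝ, G ξ =
      (∑ i ∈ Finset.range k, C (q i) * (X + 1) ^ (k - i))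
        + C ((derivative^[k] P).eval ξ * (b - a) ^ k / (Nat.factorial k)))
    (hsign : ∀ ξ ∈ Set.Icc a b, G ξ ≠ 0 ∧
      ((∀ j, 0 ≤ (G ξ).coeff j) ∨ (∀ j, (G ξ).coeff j ≤ 0))) :
    ∀ x ∈ Set.Ioo a b, P.eval x ≠ 0 := by
  intro x hx hPx
  obtain ⟨hax, hxb⟩ := hx
  have hba : (0:ℝ) < b - a := sub_pos.mpr hab
  set t : ℝ := (x - a) / (b - a) with ht
  have ht0 : 0 < t := div_pos (sub_pos.mpr hax) hba
  have ht1 : t < 1 := (div_lt_one hba).mpr (by linarith)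
  have hbt : (b - a) * t = x - a := mul_div_cancel₀ _ hba.ne'
  have hsUD : UniqueDiffOn ℝ (Set.Icc a x) := uniqueDiffOn_Icc hax
  have hk' : k - 1 + 1 = k := Nat.succ_pred_eq_of_pos hk1
  -- Taylor's theorem with Lagrange remainder
  obtain ⟨ξ, hξ, heq⟩ := taylor_mean_remainder_lagrange (f := fun y : ℝ => P.eval y)
    (n := k - 1) hax.ne ((contDiff_eval_poly P).contDiffOn)
    (by rw [Set.uIcc_of_le hax.le, Set.uIoo_of_le hax.le]; exact
    (((derivative^[k-1] P).differentiable.differentiableOn).congr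
      (fun y hy => iteratedDerivWithin_poly hsUD (k-1) P y (Set.Ioo_subset_Icc_self hy))))
  rw [Set.uIcc_of_le hax.le] at heq
  rw [Set.uIoo_of_le hax.le] at hξ
  have hξI : ξ ∈ Set.Icc a x := Set.Ioo_subset_Icc_self hξ
  rw [hk'] at heq
  rw [iteratedDerivWithin_poly hsUD k P ξ hξI] at heq
  have hT : taylorWithinEval (fun y : ℝ => P.eval y) (k-1) (Set.Icc a x) a x
      = ∑ i ∈ Finset.range k, (derivative^[i] P).eval a * (x - a) ^ i / (Nat.factorial i) := by
    rw [taylor_within_apply, hk']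
    refine Finset.sum_congr rfl fun i _ => ?_
    rw [iteratedDerivWithin_poly hsUD i P a (Set.left_mem_Icc.mpr hax.le), smul_eq_mul]
    ring
  rw [hT] at heq
  have hPx' : (fun y : ℝ => P.eval y) x = 0 := hPx
  have hsum : (∑ i ∈ Finset.range k, (derivative^[i] P).eval a * (x - a) ^ i / (Nat.factorial i))
      + (derivative^[k] P).eval ξ * (x - a) ^ k / (Nat.factorial k) = 0 := by
    have := heq
    simp only [hPx'] at this
    linarith
  -- evaluate G ξ at (1 - t)/t
  set X0 : ℝ := (1 - t) / t with hX0
  have hX0pos : 0 < X0 := div_pos (by linarith) ht0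
  have hX1 : X0 + 1 = 1 / t := by rw [hX0]; field_simp; ring
  have hpow : ∀ i, i < k → (1/t) ^ (k - i) * t ^ k = t ^ i := by
    intro i hik
    have h1 : t ^ k = t ^ (k - i) * t ^ i := by
      rw [← pow_add, Nat.sub_add_cancel hik.le]
    rw [h1, ← mul_assoc, ← mul_pow, one_div_mul_cancel ht0.ne', one_pow, one_mul]
  have key : (G ξ).eval X0 * t ^ k
      = (∑ i ∈ Finset.range k, (derivative^[i] P).eval a * (x - a) ^ i / (Nat.factorial i))
        + (derivative^[k] P).eval ξ * (x - a) ^ k / (Nat.factorial k) := by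
    rw [hG ξ, eval_add, eval_C, Polynomial.eval_finset_sum]
    simp only [eval_mul, eval_C, eval_pow, eval_add, eval_X, eval_one]
    rw [hX1, add_mul, Finset.sum_mul]
    congr 1
    · refine Finset.sum_congr rfl fun i hi => ?_
      have hik := Finset.mem_range.mp hi
      rw [mul_assoc, hpow i hik, hq i]
      have h3 : (x - a) ^ i = (b - a) ^ i * t ^ i := by rw [← mul_pow, hbt]
      rw [h3]; ring
    · have h3 : (x - a) ^ k = (b - a) ^ k * t ^ k := by rw [← mul_pow, hbt]
      rw [h3]; ring
  have evalG0 : (G ξ).eval X0 = 0 := by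
    have htk : t ^ k ≠ 0 := pow_ne_zero _ ht0.ne'
    have : (G ξ).eval X0 * t ^ k = 0 := by rw [key, hsum]
    exact (mul_eq_zero.mp this).resolve_right htk
  have hξab : ξ ∈ Set.Icc a b := ⟨hξ.1.le, hξ.2.le.trans hxb.le⟩
  obtain ⟨hGne, hc⟩ := hsign ξ hξab
  rcases hc with h | h
  · exact absurd evalG0 (poly_pos_of_nonneg_coeffs _ hGne h hX0pos).ne'
  · have hpos : 0 < (-(G ξ)).eval X0 := by
      refine poly_pos_of_nonneg_coeffs _ (neg_ne_zero.mpr hGne) (fun j => ?_) hX0pos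
      rw [Polynomial.coeff_neg]; exact neg_nonneg.mpr (h j)
    rw [eval_neg, evalG0, neg_zero] at hpos
    exact lt_irrefl 0 hpos
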